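/- arXiv:2011.00783 — 2 statements merged into one kernel-verified Lean document; each statement's English description precedes it below -/
import Mathlib

section
/- Let E : ℝ^d → L(ℝ^d) be a map into symmetric matrices which is Lipschitz with constant L, and suppose all eigenvalues of E(x) are at least a > 1/2 for every x. Then for every δ > 0 there exist constants C, C̃ > 0 such that for all r ∈ (0,1) and all x, y ∈ ℝ^d: ‖r^{E(x)} − r^{E(y)}‖ ≤ C ‖E(x) − E(y)‖ r^{a−δ} ≤ C̃ ‖x − y‖ r^{a−δ}. -/
open Matrix MeasureTheory
open scoped ENNReal

noncomputable def toCLM {d : ℕ} (A : Matrix (Fin d) (Fin d) ℝ) :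
    EuclideanSpace ℝ (Fin d) →L[ℝ] EuclideanSpace ℝ (Fin d) :=
  LinearMap.toContinuousLinearMap (Matrix.toEuclideanLin A)

/-- `mexp A r` is the matrix power `r^A := exp(A log r)`, acting on Euclidean space,
so that `‖mexp A r‖` is the operator norm induced by the Euclidean norm. -/
noncomputable def mexp {d : ℕ} (A : Matrix (Fin d) (Fin d) ℝ) (r : ℝ) :
    EuclideanSpace ℝ (Fin d) →L[ℝ] EuclideanSpace ℝ (Fin d) :=
  NormedSpace.exp (Real.log r • toCLM A)

section Aux

open Nat Filter Topology

lemma log_rpow_bound {δ : ℝ} (hδ : 0 < δ) {r : ℝ} (hr0 : 0 < r) (hr1 : r < 1) :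
    |Real.log r| * r ^ δ ≤ Real.exp (-1) / δ := by
  have hs : Real.log r < 0 := Real.log_neg hr0 hr1
  rw [abs_of_neg hs, Real.rpow_def_of_pos hr0]
  set s := -Real.log r with hsdef
  set w := Real.exp (δ * s) with hw
  have hw0 : 0 < w := Real.exp_pos _
  have harg : Real.log r * δ = -(δ * s) := by rw [hsdef]; ring
  rw [harg, Real.exp_neg, ← hw]
  have k1 : δ * s ≤ Real.exp (δ * s - 1) := by
    have := Real.add_one_le_exp (δ * s - 1); linarith
  have k2 : Real.exp (δ * s - 1) = w * Real.exp (-1) := by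
    rw [hw, ← Real.exp_add]; ring_nf
  rw [← div_eq_mul_inv, div_le_div_iff₀ hw0 hδ]
  nlinarith [k1, k2]

lemma pow_sub_pow_bound {𝔸 : Type*} [NormedRing 𝔸] (X Y : 𝔸) (u : ℝ)
    (hX : ∀ k : ℕ, ‖X ^ k‖ ≤ u ^ k) (hY : ∀ k : ℕ, ‖Y ^ k‖ ≤ u ^ k) :
    ∀ n : ℕ, ‖X ^ n - Y ^ n‖ ≤ n * ‖X - Y‖ * u ^ (n - 1) := by
  have hu : 0 ≤ u := by have := hX 1; simp at this; exact le_trans (norm_nonneg _) this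
  intro n
  induction n with
  | zero => simp
  | succ n ih =>
    rcases n with _ | m
    · simpa using le_refl ‖X - Y‖
    · have key : X ^ (m+2) - Y ^ (m+2) = X ^ (m+1) * (X - Y) + (X ^ (m+1) - Y ^ (m+1)) * Y := by
        rw [pow_succ, pow_succ]; noncomm_ring
      have hYle : ‖Y‖ ≤ u := by have := hY 1; simpa using this
      have h1 : ‖X ^ (m+2) - Y ^ (m+2)‖ ≤ ‖X ^ (m+1)‖ * ‖X - Y‖ + ‖X ^ (m+1) - Y ^ (m+1)‖ * ‖Y‖ := by
        rw [key]
        exact le_trans (norm_add_le _ _) (add_le_add (norm_mul_le _ _) (norm_mul_le _ _))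
      have h2 : ‖X ^ (m+1) - Y ^ (m+1)‖ * ‖Y‖ ≤ (↑(m+1) * ‖X - Y‖ * u ^ (m + 1 - 1)) * u :=
        mul_le_mul ih hYle (norm_nonneg _) (by positivity)
      have h3 : ‖X ^ (m+1)‖ * ‖X - Y‖ ≤ u ^ (m+1) * ‖X - Y‖ :=
        mul_le_mul_of_nonneg_right (hX (m+1)) (norm_nonneg _)
      calc ‖X ^ (m+2) - Y ^ (m+2)‖
          ≤ ‖X ^ (m+1)‖ * ‖X - Y‖ + ‖X ^ (m+1) - Y ^ (m+1)‖ * ‖Y‖ := h1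
        _ ≤ u ^ (m+1) * ‖X - Y‖ + (↑(m+1) * ‖X - Y‖ * u ^ (m + 1 - 1)) * u := add_le_add h3 h2
        _ = ↑(m+1+1) * ‖X - Y‖ * u ^ (m + 1 + 1 - 1) := by
            rw [Nat.add_sub_cancel, Nat.add_sub_cancel, mul_assoc, ← pow_succ]
            push_cast; ring

lemma norm_exp_sub_exp_le {𝔸 : Type*} [NormedRing 𝔸] [NormedAlgebra ℝ 𝔸] [CompleteSpace 𝔸]
    (h1 : ‖(1 : 𝔸)‖ ≤ 1) (X Y : 𝔸) :
    ‖NormedSpace.exp X - NormedSpace.exp Y‖ ≤ ‖X - Y‖ * Real.exp (max ‖X‖ ‖Y‖) := by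
  set M := max ‖X‖ ‖Y‖ with hM
  have hM0 : 0 ≤ M := le_trans (norm_nonneg X) (le_max_left _ _)
  have hXM : ∀ k : ℕ, ‖X ^ k‖ ≤ M ^ k := by
    intro k
    cases k with
    | zero => simpa using h1
    | succ m =>
      exact le_trans (norm_pow_le' X m.succ_pos)
        (pow_le_pow_left₀ (norm_nonneg _) (le_max_left _ _) _)
  have hYM : ∀ k : ℕ, ‖Y ^ k‖ ≤ M ^ k := by
    intro k
    cases k with
    | zero => simpa using h1
    | succ m =>
      exact le_trans (norm_pow_le' Y m.succ_pos)
        (pow_le_pow_left₀ (norm_nonneg _) (le_max_right _ _) _)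
  have hsum1 : Summable (fun n : ℕ => (n !⁻¹ : ℝ) • X ^ n) := NormedSpace.expSeries_summable' X
  have hsum2 : Summable (fun n : ℕ => (n !⁻¹ : ℝ) • Y ^ n) := NormedSpace.expSeries_summable' Y
  have e1 := congrFun (NormedSpace.exp_eq_tsum (𝕂 := ℝ) (𝔸 := 𝔸)) X
  have e2 := congrFun (NormedSpace.exp_eq_tsum (𝕂 := ℝ) (𝔸 := 𝔸)) Y
  have hdiff : NormedSpace.exp X - NormedSpace.exp Y
      = ∑' n : ℕ, (n !⁻¹ : ℝ) • (X ^ n - Y ^ n) := by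
    rw [e1, e2, ← hsum1.tsum_sub hsum2]
    simp [smul_sub]
  set g : ℕ → ℝ := fun n => ‖X - Y‖ * ((n : ℝ) * ((n ! : ℝ))⁻¹ * M ^ (n - 1)) with hg
  have hgsucc : ∀ n : ℕ, g (n+1) = ‖X - Y‖ * (M ^ n / n !) := by
    intro n
    have hfac : ((n+1)! : ℝ) = (n+1) * n ! := by push_cast [Nat.factorial_succ]; ring
    have hne : ((n:ℝ)+1) ≠ 0 := by positivity
    have hne2 : ((n ! : ℝ)) ≠ 0 := by positivity
    simp only [hg, Nat.add_sub_cancel]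
    rw [hfac]
    push_cast
    field_simp
  have hgsum : Summable g := by
    rw [← summable_nat_add_iff 1]
    simp only [hgsucc]
    exact (Real.summable_pow_div_factorial M).mul_left _
  have hterm : ∀ n : ℕ, ‖(n !⁻¹ : ℝ) • (X ^ n - Y ^ n)‖ ≤ g n := by
    intro n
    rw [norm_smul, Real.norm_eq_abs, abs_of_nonneg (by positivity : (0:ℝ) ≤ ((n ! : ℝ))⁻¹)]
    calc ((n ! : ℝ))⁻¹ * ‖X ^ n - Y ^ n‖
        ≤ ((n ! : ℝ))⁻¹ * (n * ‖X - Y‖ * M ^ (n-1)) :=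
          mul_le_mul_of_nonneg_left (pow_sub_pow_bound X Y M hXM hYM n) (by positivity)
      _ = g n := by simp only [hg]; ring
  have hbound : ‖NormedSpace.exp X - NormedSpace.exp Y‖ ≤ ∑' n, g n := by
    rw [hdiff]
    exact tsum_of_norm_bounded hgsum.hasSum hterm
  have hgval : ∑' n, g n = ‖X - Y‖ * Real.exp M := by
    rw [hgsum.tsum_eq_zero_add]
    simp only [hgsucc]
    have hg0 : g 0 = 0 := by simp [hg]
    rw [hg0, zero_add, tsum_mul_left]
    congr 1
    rw [Real.exp_eq_exp_ℝ]
    rw [congrFun (NormedSpace.exp_eq_tsum_div (𝔸 := ℝ)) M]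
  rw [hgval] at hbound
  exact hbound

lemma exp_smul_key {𝔸 : Type*} [NormedRing 𝔸] [NormedAlgebra ℝ 𝔸] [CompleteSpace 𝔸]
    (h1 : ‖(1 : 𝔸)‖ ≤ 1) (P Q : 𝔸) (a t : ℝ) (ht : t ≤ 0)
    (hP : ∀ s : ℝ, s ≤ 0 → ‖NormedSpace.exp (s • P)‖ ≤ Real.exp (s * a))
    (hQ : ∀ s : ℝ, s ≤ 0 → ‖NormedSpace.exp (s • Q)‖ ≤ Real.exp (s * a)) :
    ‖NormedSpace.exp (t • P) - NormedSpace.exp (t • Q)‖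
      ≤ |t| * ‖P - Q‖ * Real.exp (t * a) := by
  set M := max ‖P‖ ‖Q‖ with hMdef
  have hM0 : 0 ≤ M := le_trans (norm_nonneg P) (le_max_left _ _)
  set b : ℕ → ℝ := fun n =>
    |t| * ‖P - Q‖ * (Real.exp (|t| / n * M) * Real.exp (t * a - t * a / n)) with hb
  have hstep : ∀ n : ℕ, 1 ≤ n →
      ‖NormedSpace.exp (t • P) - NormedSpace.exp (t • Q)‖ ≤ b n := by
    intro n hn
    let +nondep : NormedAlgebra ℚ 𝔸 := .restrictScalars ℚ ℝ 𝔸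
    have hnR : (0:ℝ) < n := by exact_mod_cast hn
    set X := NormedSpace.exp ((t/n) • P) with hX
    set Y := NormedSpace.exp ((t/n) • Q) with hY
    have hXn : X ^ n = NormedSpace.exp (t • P) := by
      rw [hX, ← NormedSpace.exp_nsmul]
      congr 1
      rw [← Nat.cast_smul_eq_nsmul ℝ, smul_smul]
      congr 1
      field_simp
    have hYn : Y ^ n = NormedSpace.exp (t • Q) := by
      rw [hY, ← NormedSpace.exp_nsmul]
      congr 1
      rw [← Nat.cast_smul_eq_nsmul ℝ, smul_smul]
      congr 1
      field_simp
    set u := Real.exp (t * a / n) with hu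
    have hdiv0 : t / n ≤ 0 := div_nonpos_of_nonpos_of_nonneg ht hnR.le
    have hXk : ∀ k : ℕ, ‖X ^ k‖ ≤ u ^ k := by
      intro k
      have hXpow : X ^ k = NormedSpace.exp (((k:ℝ) * (t/n)) • P) := by
        rw [hX, ← NormedSpace.exp_nsmul, ← Nat.cast_smul_eq_nsmul ℝ, smul_smul]
      rw [hXpow]
      have hk0 : (k:ℝ) * (t/n) ≤ 0 := mul_nonpos_of_nonneg_of_nonpos (Nat.cast_nonneg k) hdiv0
      calc ‖NormedSpace.exp (((k:ℝ) * (t/n)) • P)‖ ≤ Real.exp (((k:ℝ) * (t/n)) * a) := hP _ hk0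
        _ = u ^ k := by rw [hu, ← Real.exp_nat_mul]; congr 1; field_simp
    have hYk : ∀ k : ℕ, ‖Y ^ k‖ ≤ u ^ k := by
      intro k
      have hYpow : Y ^ k = NormedSpace.exp (((k:ℝ) * (t/n)) • Q) := by
        rw [hY, ← NormedSpace.exp_nsmul, ← Nat.cast_smul_eq_nsmul ℝ, smul_smul]
      rw [hYpow]
      have hk0 : (k:ℝ) * (t/n) ≤ 0 := mul_nonpos_of_nonneg_of_nonpos (Nat.cast_nonneg k) hdiv0
      calc ‖NormedSpace.exp (((k:ℝ) * (t/n)) • Q)‖ ≤ Real.exp (((k:ℝ) * (t/n)) * a) := hQ _ hk0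
        _ = u ^ k := by rw [hu, ← Real.exp_nat_mul]; congr 1; field_simp
    have hpow := pow_sub_pow_bound X Y u hXk hYk n
    rw [hXn, hYn] at hpow
    have hXYnorm : ‖X - Y‖ ≤ (|t|/n) * ‖P - Q‖ * Real.exp (|t|/n * M) := by
      have h := norm_exp_sub_exp_le h1 ((t/n) • P) ((t/n) • Q)
      have e1 : (t/n) • P - (t/n) • Q = (t/n) • (P - Q) := (smul_sub _ _ _).symm
      have e2 : ‖(t/n) • (P - Q)‖ = (|t|/n) * ‖P - Q‖ := by
        rw [norm_smul, Real.norm_eq_abs, abs_div, Nat.abs_cast]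
      have e3 : max ‖(t/n) • P‖ ‖(t/n) • Q‖ = |t|/n * M := by
        rw [norm_smul, norm_smul, Real.norm_eq_abs, abs_div, Nat.abs_cast]
        exact (mul_max_of_nonneg _ _ (by positivity)).symm
      rw [e1, e2, e3] at h
      exact h
    have hun : u ^ (n - 1) = Real.exp (t * a - t * a / n) := by
      rw [hu, ← Real.exp_nat_mul]
      congr 1
      rw [Nat.cast_sub hn]
      push_cast
      field_simp
    have hu0 : 0 ≤ u := (Real.exp_pos _).le
    calc ‖NormedSpace.exp (t • P) - NormedSpace.exp (t • Q)‖
        ≤ n * ‖X - Y‖ * u ^ (n - 1) := hpow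
      _ ≤ n * ((|t|/n) * ‖P - Q‖ * Real.exp (|t|/n * M)) * u ^ (n - 1) := by
          apply mul_le_mul_of_nonneg_right _ (pow_nonneg hu0 _)
          exact mul_le_mul_of_nonneg_left hXYnorm (Nat.cast_nonneg n)
      _ = b n := by
          rw [hun, hb]
          field_simp
  have hlim : Tendsto b atTop (𝓝 (|t| * ‖P - Q‖ * Real.exp (t * a))) := by
    have l1 : Tendsto (fun n : ℕ => |t| / n * M) atTop (𝓝 0) := by
      have := (tendsto_const_div_atTop_nhds_zero_nat |t|).mul_const M
      simpa using this
    have l2 : Tendsto (fun n : ℕ => t * a - t * a / n) atTop (𝓝 (t * a)) := by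
      have := (tendsto_const_div_atTop_nhds_zero_nat (t * a)).const_sub (t * a)
      simpa using this
    have hmul : Tendsto (fun n : ℕ => Real.exp (|t| / n * M) * Real.exp (t * a - t * a / n))
        atTop (𝓝 (Real.exp 0 * Real.exp (t * a))) :=
      ((Real.continuous_exp.tendsto _).comp l1).mul ((Real.continuous_exp.tendsto _).comp l2)
    have := hmul.const_mul (|t| * ‖P - Q‖)
    simpa [hb] using this
  exact ge_of_tendsto hlim (eventually_atTop.2 ⟨1, hstep⟩)

lemma toCLM_eq {d : ℕ} (A : Matrix (Fin d) (Fin d) ℝ) :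
    toCLM A = Matrix.toEuclideanCLM (𝕜 := ℝ) A := rfl

lemma unitary_clm_norm_le {d : ℕ}
    (v : EuclideanSpace ℝ (Fin d) →L[ℝ] EuclideanSpace ℝ (Fin d))
    (h : star v * v = 1) : ‖v‖ ≤ 1 := by
  refine v.opNorm_le_bound zero_le_one (fun x => ?_)
  have h1 : (inner ℝ (v x) (v x) : ℝ) = (inner ℝ x x : ℝ) := by
    have h2 := congrArg (fun T : EuclideanSpace ℝ (Fin d) →L[ℝ] EuclideanSpace ℝ (Fin d)
        => (inner ℝ (T x) x : ℝ)) h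
    simpa [ContinuousLinearMap.mul_apply, ContinuousLinearMap.star_eq_adjoint,
      ContinuousLinearMap.adjoint_inner_left] using h2
  have h2 : ‖v x‖^2 = ‖x‖^2 := by
    rw [← real_inner_self_eq_norm_sq, ← real_inner_self_eq_norm_sq, h1]
  nlinarith [norm_nonneg (v x), norm_nonneg x]

lemma diag_norm_le {d : ℕ} (w : Fin d → ℝ) (c : ℝ) (hc : 0 ≤ c) (h : ∀ i, |w i| ≤ c) :
    ‖toCLM (Matrix.diagonal w)‖ ≤ c := by
  refine ContinuousLinearMap.opNorm_le_bound _ hc (fun x => ?_)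
  have hx : ∀ i, (toCLM (Matrix.diagonal w) x) i = w i * x i := by
    intro i
    show ((Matrix.diagonal w) *ᵥ _) i = _
    rw [Matrix.mulVec_diagonal]
    rfl
  rw [EuclideanSpace.norm_eq, EuclideanSpace.norm_eq]
  have hsum : ∑ i, ‖(toCLM (Matrix.diagonal w) x) i‖^2 ≤ c^2 * ∑ i, ‖x i‖^2 := by
    rw [Finset.mul_sum]
    apply Finset.sum_le_sum
    intro i _
    rw [hx i]
    have := h i
    have h1 : ‖w i * x i‖^2 = (w i)^2 * ‖x i‖^2 := by
      rw [norm_mul]; rw [Real.norm_eq_abs, mul_pow, sq_abs]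
    rw [h1]
    have h2 : (w i)^2 ≤ c^2 := by nlinarith [abs_nonneg (w i), sq_abs (w i)]
    nlinarith [sq_nonneg (‖x i‖)]
  calc Real.sqrt (∑ i, ‖(toCLM (Matrix.diagonal w) x) i‖^2)
      ≤ Real.sqrt (c^2 * ∑ i, ‖x i‖^2) := Real.sqrt_le_sqrt hsum
    _ = c * Real.sqrt (∑ i, ‖x i‖^2) := by
        rw [Real.sqrt_mul (sq_nonneg c), Real.sqrt_sq hc]

lemma norm_exp_smul_hermitian_le {d : ℕ} {A : Matrix (Fin d) (Fin d) ℝ} (hA : A.IsHermitian)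
    {a : ℝ} (heig : ∀ i, a ≤ hA.eigenvalues i) {t : ℝ} (ht : t ≤ 0) :
    ‖NormedSpace.exp (t • toCLM A)‖ ≤ Real.exp (t * a) := by
  set U : Matrix (Fin d) (Fin d) ℝ := (hA.eigenvectorUnitary : Matrix (Fin d) (Fin d) ℝ) with hUdef
  have hmem := (hA.eigenvectorUnitary).2
  have hU1 : star U * U = 1 := (Matrix.mem_unitaryGroup_iff'.mp hmem)
  have hU2 : U * star U = 1 := (Matrix.mem_unitaryGroup_iff.mp hmem)
  set V : (Matrix (Fin d) (Fin d) ℝ)ˣ := ⟨U, star U, hU2, hU1⟩ with hVdef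
  have hconj : t • A = (V : Matrix (Fin d) (Fin d) ℝ)
      * (Matrix.diagonal (fun i => t * hA.eigenvalues i))
      * ((V⁻¹ : (Matrix (Fin d) (Fin d) ℝ)ˣ) : Matrix (Fin d) (Fin d) ℝ) := by
    have hsd := hA.spectral_theorem
    rw [Unitary.conjStarAlgAut_apply] at hsd
    have hD : Matrix.diagonal (fun i => t * hA.eigenvalues i)
        = t • Matrix.diagonal (RCLike.ofReal ∘ hA.eigenvalues) := by
      rw [← Matrix.diagonal_smul]
      congr 1
    show t • A = U * (Matrix.diagonal fun i => t * hA.eigenvalues i) * star U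
    rw [hD, mul_smul_comm, smul_mul_assoc, ← hsd]
  have hexp_mat : NormedSpace.exp (t • A)
      = U * Matrix.diagonal (fun i => Real.exp (t * hA.eigenvalues i)) * star U := by
    rw [hconj, Matrix.exp_units_conj V, Matrix.exp_diagonal]
    show U * _ * star U = _
    congr 2
    funext i
    rw [Pi.exp_def]
    simp [Real.exp_eq_exp_ℝ]
  have hcont : Continuous fun m : Matrix (Fin d) (Fin d) ℝ => Matrix.toEuclideanCLM (𝕜 := ℝ) m := by
    have h := LinearMap.continuous_of_finiteDimensional
      (((Matrix.toEuclideanLin (𝕜 := ℝ) (m := Fin d) (n := Fin d)).trans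
        LinearMap.toContinuousLinearMap).toLinearMap)
    exact h
  letI : SeminormedRing (Matrix (Fin d) (Fin d) ℝ) := Matrix.linftyOpSemiNormedRing
  letI : NormedRing (Matrix (Fin d) (Fin d) ℝ) := Matrix.linftyOpNormedRing
  letI : NormedAlgebra ℝ (Matrix (Fin d) (Fin d) ℝ) := Matrix.linftyOpNormedAlgebra
  have hclm : NormedSpace.exp (t • toCLM A)
      = toCLM U * toCLM (Matrix.diagonal (fun i => Real.exp (t * hA.eigenvalues i)))
        * toCLM (star U) := by
    have h1 : t • toCLM A = Matrix.toEuclideanCLM (𝕜 := ℝ) (t • A) := by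
      rw [_root_.map_smul, toCLM_eq]
    let +nondep : NormedAlgebra ℚ (Matrix (Fin d) (Fin d) ℝ) := .restrictScalars ℚ ℝ _
    rw [h1, ← NormedSpace.map_exp (Matrix.toEuclideanCLM (𝕜 := ℝ)) hcont]
    erw [hexp_mat]
    rw [_root_.map_mul, _root_.map_mul]
    rfl
  have hstar1 : star (toCLM U) * toCLM U = 1 := by
    rw [toCLM_eq, ← map_star, ← _root_.map_mul, hU1, _root_.map_one]
  have hstar2 : star (toCLM (star U)) * toCLM (star U) = 1 := by
    rw [toCLM_eq, ← map_star, ← _root_.map_mul, star_star, hU2, _root_.map_one]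
  have hu1 : ‖toCLM U‖ ≤ 1 := unitary_clm_norm_le _ hstar1
  have hu2 : ‖toCLM (star U)‖ ≤ 1 := unitary_clm_norm_le _ hstar2
  have hd : ‖toCLM (Matrix.diagonal (fun i => Real.exp (t * hA.eigenvalues i)))‖
      ≤ Real.exp (t * a) := by
    apply diag_norm_le _ _ (Real.exp_pos _).le
    intro i
    rw [abs_of_pos (Real.exp_pos _)]
    exact Real.exp_le_exp.2 (mul_le_mul_of_nonpos_left (heig i) ht)
  rw [hclm]
  calc ‖toCLM U * toCLM (Matrix.diagonal (fun i => Real.exp (t * hA.eigenvalues i)))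
        * toCLM (star U)‖
      ≤ ‖toCLM U * toCLM (Matrix.diagonal (fun i => Real.exp (t * hA.eigenvalues i)))‖
        * ‖toCLM (star U)‖ := norm_mul_le _ _
    _ ≤ (‖toCLM U‖ * ‖toCLM (Matrix.diagonal (fun i => Real.exp (t * hA.eigenvalues i)))‖)
        * ‖toCLM (star U)‖ :=
        mul_le_mul_of_nonneg_right (norm_mul_le _ _) (norm_nonneg _)
    _ ≤ (1 * Real.exp (t * a)) * 1 := by
        apply mul_le_mul _ hu2 (norm_nonneg _) (by positivity)
        exact mul_le_mul hu1 hd (norm_nonneg _) zero_le_one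
    _ = Real.exp (t * a) := by ring

end Aux

theorem stmt2 (d : ℕ) (E : EuclideanSpace ℝ (Fin d) → Matrix (Fin d) (Fin d) ℝ)
    (hsym : ∀ x, (E x).IsHermitian) (L : ℝ)
    (hLip : ∀ x y, ‖toCLM (E x) - toCLM (E y)‖ ≤ L * ‖x - y‖)
    (a : ℝ) (ha : 1/2 < a)
    (heig : ∀ x i, a ≤ (hsym x).eigenvalues i)
    (δ : ℝ) (hδ : 0 < δ) :
    ∃ C : ℝ, 0 < C ∧ ∃ C' : ℝ, 0 < C' ∧
      ∀ r : ℝ, 0 < r → r < 1 → ∀ x y : EuclideanSpace ℝ (Fin d),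
        ‖mexp (E x) r - mexp (E y) r‖ ≤ C * ‖toCLM (E x) - toCLM (E y)‖ * r ^ (a - δ) ∧
        C * ‖toCLM (E x) - toCLM (E y)‖ * r ^ (a - δ) ≤ C' * ‖x - y‖ * r ^ (a - δ) := by
  refine ⟨Real.exp (-1) / δ, by positivity, (Real.exp (-1) / δ) * (|L| + 1), by positivity, ?_⟩
  intro r hr0 hr1 x y
  have hlog : Real.log r ≤ 0 := (Real.log_neg hr0 hr1).le
  have hΔ0 : (0:ℝ) ≤ ‖toCLM (E x) - toCLM (E y)‖ := norm_nonneg _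
  have hrad : (0:ℝ) ≤ r ^ (a - δ) := Real.rpow_nonneg hr0.le _
  constructor
  · have hP : ∀ s : ℝ, s ≤ 0 → ‖NormedSpace.exp (s • toCLM (E x))‖ ≤ Real.exp (s * a) :=
      fun s hs => norm_exp_smul_hermitian_le (hsym x) (heig x) hs
    have hQ : ∀ s : ℝ, s ≤ 0 → ‖NormedSpace.exp (s • toCLM (E y))‖ ≤ Real.exp (s * a) :=
      fun s hs => norm_exp_smul_hermitian_le (hsym y) (heig y) hs
    have h1le : ‖(1 : EuclideanSpace ℝ (Fin d) →L[ℝ] EuclideanSpace ℝ (Fin d))‖ ≤ 1 := by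
      rw [ContinuousLinearMap.one_def]; exact ContinuousLinearMap.norm_id_le
    have hkey := exp_smul_key h1le (toCLM (E x)) (toCLM (E y)) a (Real.log r) hlog hP hQ
    have hmex : mexp (E x) r - mexp (E y) r
        = NormedSpace.exp (Real.log r • toCLM (E x))
          - NormedSpace.exp (Real.log r • toCLM (E y)) := rfl
    rw [hmex]
    have hra : Real.exp (Real.log r * a) = r ^ a := (Real.rpow_def_of_pos hr0 a).symm
    rw [hra] at hkey
    refine le_trans hkey ?_
    have hsplit : r ^ a = r ^ δ * r ^ (a - δ) := by
      rw [← Real.rpow_add hr0]; ring_nf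
    have hlb := log_rpow_bound hδ hr0 hr1
    have h2 : |Real.log r| * ‖toCLM (E x) - toCLM (E y)‖ * r ^ a
        = (|Real.log r| * r ^ δ) * ‖toCLM (E x) - toCLM (E y)‖ * r ^ (a - δ) := by
      rw [hsplit]; ring
    rw [h2]
    exact mul_le_mul_of_nonneg_right (mul_le_mul_of_nonneg_right hlb hΔ0) hrad
  · have h := hLip x y
    have h2 : ‖toCLM (E x) - toCLM (E y)‖ ≤ (|L| + 1) * ‖x - y‖ := by
      refine le_trans h ?_
      have := le_abs_self L
      nlinarith [norm_nonneg (x - y)]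
    calc (Real.exp (-1) / δ) * ‖toCLM (E x) - toCLM (E y)‖ * r ^ (a - δ)
        ≤ (Real.exp (-1) / δ) * ((|L| + 1) * ‖x - y‖) * r ^ (a - δ) := by
          refine mul_le_mul_of_nonneg_right (mul_le_mul_of_nonneg_left h2 (by positivity)) hrad
      _ = (Real.exp (-1) / δ) * (|L| + 1) * ‖x - y‖ * r ^ (a - δ) := by ring
end

section
/- Let E : ℝ^d → GL(ℝ^d) assign to each x a symmetric matrix, Lipschitz in x, with all eigenvalues ≥ a > 1/2. Then there exists C₂ > 0 such that for all x, y ∈ ℝ^d, ∫_{S^{d−1}} ∫₀¹ ‖r^{E(x)}θ − r^{E(y)}θ‖² r^{−2} dr σ(dθ) ≤ C₂ ‖x − y‖², where σ is a fixed finite measure on S^{d−1}. -/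
open Matrix MeasureTheory
open scoped ENNReal

set_option maxHeartbeats 1600000
set_option synthInstance.maxHeartbeats 400000

section Aux

variable {d : ℕ}

lemma smul_algebra_fact {R : Type*} [Ring R] [Algebra ℝ R] (t : ℝ) (P Q X Y : R) :
    t • (P * ((X - Y) * Q)) = t • (P * X) * Q + P * (-(t • (Y * Q))) := by
  have h1 : t • (P * ((X - Y) * Q)) = t • (P * (X * Q)) - t • (P * (Y * Q)) := by
    rw [sub_mul, mul_sub, smul_sub]
  have h2 : t • (P * X) * Q = t • (P * (X * Q)) := by rw [smul_mul_assoc, mul_assoc]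
  have h3 : P * (-(t • (Y * Q))) = -(t • (P * (Y * Q))) := by
    rw [mul_neg, mul_smul_comm]
  rw [h1, h2, h3, sub_eq_add_neg]

set_option maxHeartbeats 1000000 in
lemma exp_apply_eigen (T : EuclideanSpace ℝ (Fin d) →L[ℝ] EuclideanSpace ℝ (Fin d))
    (v : EuclideanSpace ℝ (Fin d)) (c : ℝ) (h : T v = c • v) :
    NormedSpace.exp T v = Real.exp c • v := by
  have hpow : ∀ n : ℕ, (T ^ n) v = c ^ n • v := by
    intro n
    induction n with
    | zero => simp
    | succ n ih =>
      rw [pow_succ, ContinuousLinearMap.mul_apply, h, _root_.map_smul, ih, smul_smul,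
        ← pow_succ']
  have hsum := NormedSpace.expSeries_summable' (𝕂 := ℝ) T
  have h1 : NormedSpace.exp T v = ∑' n : ℕ, (((n.factorial : ℝ))⁻¹ • T ^ n) v := by
    rw [NormedSpace.exp_eq_tsum ℝ]
    exact ((ContinuousLinearMap.apply ℝ (EuclideanSpace ℝ (Fin d)) v).map_tsum hsum)
  rw [h1]
  have h2 : ∀ n : ℕ, (((n.factorial : ℝ))⁻¹ • T ^ n) v = (c ^ n / (n.factorial : ℝ)) • v := by
    intro n
    rw [ContinuousLinearMap.smul_apply, hpow, smul_smul, inv_mul_eq_div]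
  simp_rw [h2]
  rw [(Real.summable_pow_div_factorial c).tsum_smul_const]
  congr 1
  rw [Real.exp_eq_exp_ℝ, NormedSpace.exp_eq_tsum_div]

set_option maxHeartbeats 1000000 in
lemma opNorm_exp_le {a : ℝ} (A : Matrix (Fin d) (Fin d) ℝ) (hA : A.IsHermitian)
    (heig : ∀ i, a ≤ hA.eigenvalues i) {t : ℝ} (ht : t ≤ 0) :
    ‖NormedSpace.exp (t • toCLM A)‖ ≤ Real.exp (t * a) := by
  refine ContinuousLinearMap.opNorm_le_bound _ (Real.exp_nonneg _) fun v => ?_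
  set b := hA.eigenvectorBasis with hb
  set T := NormedSpace.exp (t • toCLM A) with hT
  have hTb : ∀ i, T (b i) = Real.exp (t * hA.eigenvalues i) • b i := by
    intro i
    apply exp_apply_eigen
    have h1 : toCLM A (b i) = hA.eigenvalues i • b i := by
      show Matrix.toEuclideanLin A (b i) = _
      rw [Matrix.toEuclideanLin_apply]
      have := hA.mulVec_eigenvectorBasis i
      apply (WithLp.equiv 2 _).injective
      simpa using this
    rw [ContinuousLinearMap.smul_apply, h1, smul_smul]
  have hTv : T v = ∑ i, (Real.exp (t * hA.eigenvalues i) * b.repr v i) • b i := by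
    conv_lhs => rw [← b.sum_repr v]
    rw [map_sum]
    refine Finset.sum_congr rfl fun i _ => ?_
    rw [ContinuousLinearMap.map_smul, hTb i, smul_smul, mul_comm]
  have hrepr : ∀ j, b.repr (T v) j = Real.exp (t * hA.eigenvalues j) * b.repr v j := by
    intro j
    rw [b.repr_apply_apply, hTv, b.orthonormal.inner_right_fintype]
  have h1 : ‖T v‖ = Real.sqrt (∑ j, ‖b.repr (T v) j‖ ^ 2) := by
    rw [← b.repr.norm_map (T v), EuclideanSpace.norm_eq]
  have h2 : ‖v‖ = Real.sqrt (∑ j, ‖b.repr v j‖ ^ 2) := by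
    rw [← b.repr.norm_map v, EuclideanSpace.norm_eq]
  rw [h1, h2, ← Real.sqrt_sq (Real.exp_nonneg (t * a)), ← Real.sqrt_mul (by positivity)]
  apply Real.sqrt_le_sqrt
  rw [Finset.mul_sum]
  apply Finset.sum_le_sum
  intro j _
  rw [hrepr, norm_mul, mul_pow]
  have h0 : ‖Real.exp (t * hA.eigenvalues j)‖ = Real.exp (t * hA.eigenvalues j) :=
    Real.norm_of_nonneg (Real.exp_nonneg _)
  rw [h0]
  have hle : Real.exp (t * hA.eigenvalues j) ≤ Real.exp (t * a) :=
    Real.exp_le_exp.2 (mul_le_mul_of_nonpos_left (heig j) ht)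
  have hsq : Real.exp (t * hA.eigenvalues j) ^ 2 ≤ Real.exp (t * a) ^ 2 :=
    pow_le_pow_left₀ (Real.exp_nonneg _) hle 2
  exact mul_le_mul_of_nonneg_right hsq (by positivity)

set_option maxHeartbeats 1000000 in
lemma opNorm_exp_sub_exp_le {a : ℝ} (A B : Matrix (Fin d) (Fin d) ℝ)
    (hA : A.IsHermitian) (hB : B.IsHermitian)
    (hea : ∀ i, a ≤ hA.eigenvalues i) (heb : ∀ i, a ≤ hB.eigenvalues i)
    {t : ℝ} (ht : t ≤ 0) :
    ‖NormedSpace.exp (t • toCLM A) - NormedSpace.exp (t • toCLM B)‖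
      ≤ |t| * ‖toCLM A - toCLM B‖ * Real.exp (t * a) := by
  set SA := toCLM A with hSA
  set SB := toCLM B with hSB
  set f : ℝ → (EuclideanSpace ℝ (Fin d) →L[ℝ] EuclideanSpace ℝ (Fin d)) :=
    fun s => NormedSpace.exp ((s * t) • SA) * NormedSpace.exp (((1 - s) * t) • SB) with hf
  set D : ℝ → (EuclideanSpace ℝ (Fin d) →L[ℝ] EuclideanSpace ℝ (Fin d)) :=
    fun s => t • (NormedSpace.exp ((s * t) • SA) *
      ((SA - SB) * NormedSpace.exp (((1 - s) * t) • SB))) with hD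
  have hderiv : ∀ s : ℝ, HasDerivAt f (D s) s := by
    intro s
    have h2 : HasDerivAt (fun s : ℝ => s * t) t s := by
      simpa using (hasDerivAt_id s).mul_const t
    have h1 : HasDerivAt (fun s : ℝ => NormedSpace.exp ((s * t) • SA))
        (t • (NormedSpace.exp ((s * t) • SA) * SA)) s := by
      exact
        (hasDerivAt_exp_smul_const (𝕂 := ℝ) SA (s * t)).scomp s h2
    have h4 : HasDerivAt (fun s : ℝ => (1 - s) * t) (-t) s := by
      have h5 : HasDerivAt (fun s : ℝ => 1 - s) (-1) s := by
        simpa using ((hasDerivAt_id s).const_sub 1)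
      simpa using h5.mul_const t
    have h3 : HasDerivAt (fun s : ℝ => NormedSpace.exp (((1 - s) * t) • SB))
        (-(t • (SB * NormedSpace.exp (((1 - s) * t) • SB)))) s := by
      have h8 :=
        (hasDerivAt_exp_smul_const' (𝕂 := ℝ) SB ((1 - s) * t)).scomp s h4
      rw [neg_smul] at h8
      exact h8
    have h6 := h1.mul h3
    have h7 : D s = t • (NormedSpace.exp ((s * t) • SA) * SA) *
        NormedSpace.exp (((1 - s) * t) • SB) + NormedSpace.exp ((s * t) • SA) *
        (-(t • (SB * NormedSpace.exp (((1 - s) * t) • SB)))) := by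
      rw [hD]
      exact smul_algebra_fact t _ _ _ _
    rw [h7]
    exact h6
  have hbound : ∀ s ∈ Set.Icc (0 : ℝ) 1, ‖D s‖ ≤ |t| * ‖SA - SB‖ * Real.exp (t * a) := by
    intro s hs
    obtain ⟨hs0, hs1⟩ := hs
    have hst : s * t ≤ 0 := mul_nonpos_of_nonneg_of_nonpos hs0 ht
    have hst' : (1 - s) * t ≤ 0 := mul_nonpos_of_nonneg_of_nonpos (by linarith) ht
    have hnA : ‖NormedSpace.exp ((s * t) • SA)‖ ≤ Real.exp ((s * t) * a) :=
      opNorm_exp_le A hA hea hst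
    have hnB : ‖NormedSpace.exp (((1 - s) * t) • SB)‖ ≤ Real.exp (((1 - s) * t) * a) :=
      opNorm_exp_le B hB heb hst'
    have hX : ‖NormedSpace.exp ((s * t) • SA) *
        ((SA - SB) * NormedSpace.exp (((1 - s) * t) • SB))‖
        ≤ Real.exp ((s * t) * a) * (‖SA - SB‖ * Real.exp (((1 - s) * t) * a)) := by
      refine (norm_mul_le _ _).trans ?_
      have hY : ‖(SA - SB) * NormedSpace.exp (((1 - s) * t) • SB)‖
          ≤ ‖SA - SB‖ * Real.exp (((1 - s) * t) * a) :=
        (norm_mul_le _ _).trans (mul_le_mul_of_nonneg_left hnB (norm_nonneg _))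
      exact mul_le_mul hnA hY (norm_nonneg _) (Real.exp_nonneg _)
    have heq : Real.exp ((s * t) * a) * (‖SA - SB‖ * Real.exp (((1 - s) * t) * a))
        = ‖SA - SB‖ * Real.exp (t * a) := by
      rw [mul_left_comm, ← Real.exp_add]
      have he : (s * t) * a + ((1 - s) * t) * a = t * a := by ring
      rw [he]
    rw [hD]
    simp only
    have hns := norm_smul t (NormedSpace.exp ((s * t) • SA) *
      ((SA - SB) * NormedSpace.exp (((1 - s) * t) • SB)))
    rw [hns, Real.norm_eq_abs]
    calc |t| * ‖NormedSpace.exp ((s * t) • SA) *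
          ((SA - SB) * NormedSpace.exp (((1 - s) * t) • SB))‖
        ≤ |t| * (‖SA - SB‖ * Real.exp (t * a)) := by
          rw [← heq]; exact mul_le_mul_of_nonneg_left hX (abs_nonneg _)
      _ = |t| * ‖SA - SB‖ * Real.exp (t * a) := by ring
  have key := Convex.norm_image_sub_le_of_norm_hasDerivWithin_le
    (f' := D) (fun s _ => (hderiv s).hasDerivWithinAt) hbound (convex_Icc 0 1)
    (Set.left_mem_Icc.2 zero_le_one) (Set.right_mem_Icc.2 zero_le_one)
  have hf1 : f 1 = NormedSpace.exp (t • SA) := by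
    simp only [hf, one_mul, sub_self, zero_mul]
    have h0 : ((0:ℝ) • SB) = 0 := zero_smul ℝ SB
    rw [h0, NormedSpace.exp_zero, mul_one]
  have hf0 : f 0 = NormedSpace.exp (t • SB) := by
    simp only [hf, zero_mul, sub_zero, one_mul]
    have h0 : ((0:ℝ) • SA) = 0 := zero_smul ℝ SA
    rw [h0, NormedSpace.exp_zero, one_mul]
  rw [hf1, hf0] at key
  simpa using key

end Aux

set_option maxHeartbeats 1000000 in
theorem stmt5 (d : ℕ) (a L : ℝ) (ha : 1/2 < a) (hL : 0 ≤ L)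
    (σ : Measure (Metric.sphere (0 : EuclideanSpace ℝ (Fin d)) 1)) [IsFiniteMeasure σ]
    (E : EuclideanSpace ℝ (Fin d) → Matrix (Fin d) (Fin d) ℝ)
    (hsym : ∀ x, (E x).IsHermitian)
    (hLip : ∀ x y, ‖toCLM (E x) - toCLM (E y)‖ ≤ L * ‖x - y‖)
    (heig : ∀ x i, a ≤ (hsym x).eigenvalues i) :
    ∃ C₂ : ℝ, 0 < C₂ ∧ ∀ x y : EuclideanSpace ℝ (Fin d),
      ∫⁻ θ, ∫⁻ r in Set.Ioo (0:ℝ) 1,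
          ENNReal.ofReal
            (‖mexp (E x) r (θ : EuclideanSpace ℝ (Fin d))
              - mexp (E y) r (θ : EuclideanSpace ℝ (Fin d))‖ ^ 2 / r ^ 2) ∂volume ∂σ
        ≤ ENNReal.ofReal (C₂ * ‖x - y‖ ^ 2) := by
  have ha2 : (0:ℝ) < 2 * a - 1 := by linarith
  set ε : ℝ := (2 * a - 1) / 4 with hε
  have hε0 : 0 < ε := by positivity
  set p : ℝ := 2 * a - 2 - 2 * ε with hp
  have hp1 : (-1 : ℝ) < p := by rw [hp, hε]; linarith
  have hint : IntegrableOn (fun r : ℝ => r ^ p) (Set.Ioo 0 1) volume := by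
    have h := intervalIntegral.intervalIntegrable_rpow' (a := (0:ℝ)) (b := 1) hp1
    rw [intervalIntegrable_iff_integrableOn_Ioc_of_le zero_le_one] at h
    exact h.mono_set Set.Ioo_subset_Ioc_self
  set J : ℝ≥0∞ := ∫⁻ r in Set.Ioo (0:ℝ) 1,
      ENNReal.ofReal ((Real.log r) ^ 2 * r ^ (2 * a - 2)) with hJ
  have hJtop : J < ⊤ := by
    have hb : ∀ᵐ r ∂(volume.restrict (Set.Ioo (0:ℝ) 1)),
        ENNReal.ofReal ((Real.log r) ^ 2 * r ^ (2 * a - 2))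
          ≤ ENNReal.ofReal (ε⁻¹ ^ 2 * r ^ p) := by
      filter_upwards [ae_restrict_mem measurableSet_Ioo] with r hr
      obtain ⟨hr0, hr1⟩ := hr
      apply ENNReal.ofReal_le_ofReal
      have hlog : -Real.log r ≤ r ^ (-ε) / ε := by
        have h := Real.log_le_rpow_div (x := r⁻¹) (le_of_lt (by positivity)) hε0
        rwa [Real.log_inv, Real.inv_rpow hr0.le, ← Real.rpow_neg hr0.le] at h
      have hlog0 : 0 ≤ -Real.log r := by
        simpa using Real.log_nonpos hr0.le hr1.le
      have hsq : (Real.log r) ^ 2 ≤ (r ^ (-ε) / ε) ^ 2 := by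
        calc (Real.log r) ^ 2 = (-Real.log r) ^ 2 := (neg_sq _).symm
          _ ≤ (r ^ (-ε) / ε) ^ 2 := pow_le_pow_left₀ hlog0 hlog 2
      calc (Real.log r) ^ 2 * r ^ (2 * a - 2)
          ≤ (r ^ (-ε) / ε) ^ 2 * r ^ (2 * a - 2) :=
            mul_le_mul_of_nonneg_right hsq (Real.rpow_nonneg hr0.le _)
        _ = ε⁻¹ ^ 2 * r ^ p := by
            have h2 : (r ^ (-ε)) ^ 2 = r ^ (-(2 * ε)) := by
              rw [← Real.rpow_natCast (r ^ (-ε)) 2, ← Real.rpow_mul hr0.le]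
              congr 1
              push_cast; ring
            have h3 : r ^ (-(2 * ε)) * r ^ (2 * a - 2) = r ^ p := by
              rw [← Real.rpow_add hr0]
              congr 1
              rw [hp]; ring
            calc (r ^ (-ε) / ε) ^ 2 * r ^ (2 * a - 2)
                = ε⁻¹ ^ 2 * ((r ^ (-ε)) ^ 2 * r ^ (2 * a - 2)) := by
                  rw [div_pow, inv_pow]; ring
              _ = ε⁻¹ ^ 2 * r ^ p := by rw [h2, h3]
    calc J ≤ ∫⁻ r in Set.Ioo (0:ℝ) 1, ENNReal.ofReal (ε⁻¹ ^ 2 * r ^ p) :=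
          lintegral_mono_ae hb
      _ = ENNReal.ofReal (ε⁻¹ ^ 2) * ∫⁻ r in Set.Ioo (0:ℝ) 1, ENNReal.ofReal (r ^ p) := by
          simp_rw [ENNReal.ofReal_mul (by positivity : (0:ℝ) ≤ ε⁻¹ ^ 2)]
          exact lintegral_const_mul' _ _ ENNReal.ofReal_ne_top
      _ < ⊤ := ENNReal.mul_lt_top ENNReal.ofReal_lt_top hint.setLIntegral_lt_top
  refine ⟨L ^ 2 * J.toReal * (σ Set.univ).toReal + 1, ?_, ?_⟩
  · have h1 : 0 ≤ J.toReal := ENNReal.toReal_nonneg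
    have h2 : 0 ≤ (σ Set.univ).toReal := ENNReal.toReal_nonneg
    positivity
  intro x y
  set K : ℝ := L ^ 2 * ‖x - y‖ ^ 2 with hK
  have hK0 : 0 ≤ K := by positivity
  have hpt : ∀ θ : Metric.sphere (0 : EuclideanSpace ℝ (Fin d)) 1, ∀ r ∈ Set.Ioo (0:ℝ) 1,
      ‖mexp (E x) r (θ : EuclideanSpace ℝ (Fin d))
        - mexp (E y) r (θ : EuclideanSpace ℝ (Fin d))‖ ^ 2 / r ^ 2
        ≤ K * ((Real.log r) ^ 2 * r ^ (2 * a - 2)) := by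
    intro θ r hr
    obtain ⟨hr0, hr1⟩ := hr
    have hθ : ‖(θ : EuclideanSpace ℝ (Fin d))‖ = 1 := mem_sphere_zero_iff_norm.1 θ.2
    have ht : Real.log r ≤ 0 := Real.log_nonpos hr0.le hr1.le
    have hop := opNorm_exp_sub_exp_le (E x) (E y) (hsym x) (hsym y) (heig x) (heig y) ht
    have hop2 : ‖mexp (E x) r - mexp (E y) r‖
        ≤ |Real.log r| * (L * ‖x - y‖) * Real.exp (Real.log r * a) := by
      unfold mexp
      refine hop.trans ?_
      exact mul_le_mul_of_nonneg_right
        (mul_le_mul_of_nonneg_left (hLip x y) (abs_nonneg _)) (Real.exp_nonneg _)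
    have happ : ‖mexp (E x) r (θ : EuclideanSpace ℝ (Fin d))
        - mexp (E y) r (θ : EuclideanSpace ℝ (Fin d))‖
        ≤ |Real.log r| * (L * ‖x - y‖) * Real.exp (Real.log r * a) := by
      have h := (mexp (E x) r - mexp (E y) r).le_opNorm (θ : EuclideanSpace ℝ (Fin d))
      rw [ContinuousLinearMap.sub_apply, hθ, mul_one] at h
      exact h.trans hop2
    have hr2 : (0:ℝ) < r ^ 2 := by positivity
    calc ‖mexp (E x) r (θ : EuclideanSpace ℝ (Fin d))
          - mexp (E y) r (θ : EuclideanSpace ℝ (Fin d))‖ ^ 2 / r ^ 2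
        ≤ (|Real.log r| * (L * ‖x - y‖) * Real.exp (Real.log r * a)) ^ 2 / r ^ 2 := by
          gcongr
      _ = K * ((Real.log r) ^ 2 * r ^ (2 * a - 2)) := by
          have e1 : Real.exp (Real.log r * a) = r ^ a := (Real.rpow_def_of_pos hr0 a).symm
          have e2 : r ^ (2 * a - 2) = (r ^ a) ^ 2 / r ^ (2:ℕ) := by
            rw [← Real.rpow_natCast (r ^ a) 2, ← Real.rpow_mul hr0.le,
              ← Real.rpow_natCast r 2, ← Real.rpow_sub hr0]
            congr 1
            push_cast; ring
          rw [e1, e2, hK]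
          have hrne : (r:ℝ) ^ (2:ℕ) ≠ 0 := by positivity
          field_simp
          rw [sq_abs]
          ring
  have hinner : ∀ θ : Metric.sphere (0 : EuclideanSpace ℝ (Fin d)) 1,
      ∫⁻ r in Set.Ioo (0:ℝ) 1, ENNReal.ofReal
        (‖mexp (E x) r (θ : EuclideanSpace ℝ (Fin d))
          - mexp (E y) r (θ : EuclideanSpace ℝ (Fin d))‖ ^ 2 / r ^ 2) ∂volume
        ≤ ENNReal.ofReal K * J := by
    intro θ
    calc ∫⁻ r in Set.Ioo (0:ℝ) 1, ENNReal.ofReal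
          (‖mexp (E x) r (θ : EuclideanSpace ℝ (Fin d))
            - mexp (E y) r (θ : EuclideanSpace ℝ (Fin d))‖ ^ 2 / r ^ 2) ∂volume
        ≤ ∫⁻ r in Set.Ioo (0:ℝ) 1,
            ENNReal.ofReal (K * ((Real.log r) ^ 2 * r ^ (2 * a - 2))) ∂volume := by
          apply lintegral_mono_ae
          filter_upwards [ae_restrict_mem measurableSet_Ioo] with r hr
          exact ENNReal.ofReal_le_ofReal (hpt θ r hr)
      _ = ENNReal.ofReal K * J := by
          simp_rw [ENNReal.ofReal_mul hK0]
          exact lintegral_const_mul' _ _ ENNReal.ofReal_ne_top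
  calc ∫⁻ θ, ∫⁻ r in Set.Ioo (0:ℝ) 1, ENNReal.ofReal
        (‖mexp (E x) r (θ : EuclideanSpace ℝ (Fin d))
          - mexp (E y) r (θ : EuclideanSpace ℝ (Fin d))‖ ^ 2 / r ^ 2) ∂volume ∂σ
      ≤ ∫⁻ _θ, ENNReal.ofReal K * J ∂σ := lintegral_mono hinner
    _ = ENNReal.ofReal K * J * σ Set.univ := by rw [lintegral_const]
    _ ≤ ENNReal.ofReal ((L ^ 2 * J.toReal * (σ Set.univ).toReal + 1) * ‖x - y‖ ^ 2) := by
        conv_lhs => rw [← ENNReal.ofReal_toReal hJtop.ne,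
          ← ENNReal.ofReal_toReal (measure_ne_top σ Set.univ)]
        rw [← ENNReal.ofReal_mul hK0, ← ENNReal.ofReal_mul (by positivity)]
        apply ENNReal.ofReal_le_ofReal
        have h1 : 0 ≤ J.toReal := ENNReal.toReal_nonneg
        have h2 : 0 ≤ (σ Set.univ).toReal := ENNReal.toReal_nonneg
        rw [hK]
        have hexp : (L ^ 2 * J.toReal * (σ Set.univ).toReal + 1) * ‖x - y‖ ^ 2
            = L ^ 2 * ‖x - y‖ ^ 2 * J.toReal * (σ Set.univ).toReal + ‖x - y‖ ^ 2 := by ring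
        rw [hexp]
        linarith [sq_nonneg ‖x - y‖]
end
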